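/- Let A be an order-unit space with state space S(A), and let (𝔛_n) be a net of nonempty closed convex subsets of S(A) with restriction maps π_n : A → Af_ℝ(𝔛_n). If ‖a‖ = lim_n ‖π_n(a)‖ for all a ∈ A, then 𝔛_n converges to S(A) in the Hausdorff topology on closed subsets of S(A). -/

import Mathlib

open Filter Topology

/-- Kadison representation form of the state-space convergence lemma: let `K` be a
nonempty compact convex subset of a real normed space (representing the state space of an
order-unit space, with the order-unit space represented as the continuous affine
functions on `K`), and let `(𝔛 i)` be a net of nonempty closed convex subsets of `K`
(indexed by a filter `l ≠ ⊥`). If for every continuous affine function `f` the supremum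
norms satisfy `sup_{𝔛 i} |f| → sup_K |f|`, then `𝔛 i → K` in the Hausdorff topology. -/
theorem state_space_hausdorff_convergence
    {E : Type*} [NormedAddCommGroup E] [NormedSpace ℝ E]
    (K : Set E) (hKc : IsCompact K) (hKconv : Convex ℝ K) (hKne : K.Nonempty)
    {ι : Type*} (l : Filter ι) [l.NeBot]
    (𝔛 : ι → Set E)
    (h𝔛 : ∀ i, (𝔛 i).Nonempty ∧ IsClosed (𝔛 i) ∧ Convex ℝ (𝔛 i) ∧ 𝔛 i ⊆ K)
    (hnorm : ∀ f : E →ᵃ[ℝ] ℝ, Continuous f →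
      Tendsto (fun i => sSup ((fun x => |f x|) '' (𝔛 i))) l
        (𝓝 (sSup ((fun x => |f x|) '' K)))) :
    Tendsto (fun i => Metric.hausdorffDist (𝔛 i) K) l (𝓝 0) := by
  classical
  by_contra hcon
  -- extract ε > 0 with frequently `ε ≤ hausdorffDist (𝔛 i) K`
  obtain ⟨ε, hε, hfreq⟩ : ∃ ε > (0:ℝ), ∃ᶠ i in l, ε ≤ Metric.hausdorffDist (𝔛 i) K := by
    by_contra h
    push_neg at h
    apply hcon
    rw [NormedAddCommGroup.tendsto_nhds_zero]
    intro ε hε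
    have := h ε hε
    filter_upwards [this] with i hi
    rw [Real.norm_eq_abs, abs_of_nonneg Metric.hausdorffDist_nonneg]
    exact hi
  -- finiteness of Hausdorff edists between subsets of K
  have hedist : ∀ s t : Set E, s.Nonempty → t.Nonempty → s ⊆ K → t ⊆ K →
      EMetric.hausdorffEdist s t ≠ ⊤ := fun s t hs ht hsK htK =>
    Metric.hausdorffEdist_ne_top_of_nonempty_of_bounded hs ht
      (hKc.isBounded.subset hsK) (hKc.isBounded.subset htK)
  -- ultrafilter concentrating on the bad indices
  set T : Set ι := {i | ε ≤ Metric.hausdorffDist (𝔛 i) K} with hT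
  have hneBot : (l ⊓ 𝓟 T).NeBot := Filter.frequently_iff_neBot.mp hfreq
  let u : Ultrafilter ι := @Ultrafilter.of _ (l ⊓ 𝓟 T) hneBot
  have hu_le : (u : Filter ι) ≤ l ⊓ 𝓟 T := @Ultrafilter.of_le _ (l ⊓ 𝓟 T) hneBot
  have hul : (u : Filter ι) ≤ l := hu_le.trans inf_le_left
  have huT : ∀ᶠ i in (u : Filter ι), ε ≤ Metric.hausdorffDist (𝔛 i) K :=
    hu_le.trans inf_le_right (by exact Filter.mem_principal_self T)
  -- the hyperspace of nonempty compact subsets of K is compact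
  haveI : CompactSpace ↥K := isCompact_iff_compactSpace.mp hKc
  let F : ι → TopologicalSpace.NonemptyCompacts ↥K := fun i =>
    ⟨⟨Subtype.val ⁻¹' 𝔛 i,
      ((h𝔛 i).2.1.preimage continuous_subtype_val).isCompact⟩,
      ⟨⟨(h𝔛 i).1.choose, (h𝔛 i).2.2.2 (h𝔛 i).1.choose_spec⟩, (h𝔛 i).1.choose_spec⟩⟩
  obtain ⟨𝔜, -, h𝔜⟩ :=
    (isCompact_univ (X := TopologicalSpace.NonemptyCompacts ↥K)).ultrafilter_le_nhds
      (u.map F) (by simp)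
  have hF : Tendsto F (u : Filter ι) (𝓝 𝔜) := h𝔜
  set Y : Set E := Subtype.val '' (𝔜 : Set ↥K) with hYdef
  have hYcomp : IsCompact Y := 𝔜.isCompact.image continuous_subtype_val
  have hYclosed : IsClosed Y := hYcomp.isClosed
  have hYne : Y.Nonempty := 𝔜.nonempty.image _
  have hYsub : Y ⊆ K := by rintro y ⟨z, -, rfl⟩; exact z.2
  have hFi : ∀ i, Subtype.val '' ((F i : Set ↥K)) = 𝔛 i := by
    intro i
    show Subtype.val '' (Subtype.val ⁻¹' 𝔛 i) = 𝔛 i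
    rw [Subtype.image_preimage_coe]
    exact Set.inter_eq_self_of_subset_right (h𝔛 i).2.2.2
  -- Hausdorff-distance convergence of `𝔛 i` to `Y` along `u`
  have hdist : Tendsto (fun i => Metric.hausdorffDist (𝔛 i) Y) (u : Filter ι) (𝓝 0) := by
    have := (tendsto_iff_dist_tendsto_zero).1 hF
    convert this using 2 with i
    rw [Metric.NonemptyCompacts.dist_eq,
      ← Metric.hausdorffDist_image (isometry_subtype_coe (s := K)), hFi i, hYdef]
  -- Y is convex
  have hYconv : Convex ℝ Y := by
    intro y hy z hz a b ha hb hab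
    have key : ∀ η > (0:ℝ), Metric.infDist (a • y + b • z) Y ≤ 2 * η := by
      intro η hη
      have hev : ∀ᶠ i in (u : Filter ι), Metric.hausdorffDist (𝔛 i) Y < η :=
        hdist.eventually (gt_mem_nhds hη)
      obtain ⟨i, hi⟩ := hev.exists
      have hfin : EMetric.hausdorffEdist (𝔛 i) Y ≠ ⊤ :=
        hedist _ _ (h𝔛 i).1 hYne (h𝔛 i).2.2.2 hYsub
      obtain ⟨y', hy', hyy'⟩ := Metric.exists_dist_lt_of_hausdorffDist_lt' hy hi hfin
      obtain ⟨z', hz', hzz'⟩ := Metric.exists_dist_lt_of_hausdorffDist_lt' hz hi hfin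
      have hw' : a • y' + b • z' ∈ 𝔛 i := (h𝔛 i).2.2.1 hy' hz' ha hb hab
      have hdw : dist (a • y + b • z) (a • y' + b • z') ≤ η := by
        rw [dist_eq_norm]
        have : a • y + b • z - (a • y' + b • z') = a • (y - y') + b • (z - z') := by
          module
        rw [this]
        calc ‖a • (y - y') + b • (z - z')‖ ≤ ‖a • (y - y')‖ + ‖b • (z - z')‖ :=
              norm_add_le _ _
          _ = a * ‖y - y'‖ + b * ‖z - z'‖ := by
              rw [norm_smul, norm_smul, Real.norm_eq_abs, Real.norm_eq_abs,
                abs_of_nonneg ha, abs_of_nonneg hb]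
          _ ≤ a * η + b * η := by
              have h1 : ‖y - y'‖ ≤ η := by
                rw [← dist_eq_norm]; exact le_of_lt ((dist_comm y y' ▸ hyy'))
              have h2 : ‖z - z'‖ ≤ η := by
                rw [← dist_eq_norm]; exact le_of_lt ((dist_comm z z' ▸ hzz'))
              exact add_le_add (mul_le_mul_of_nonneg_left h1 ha)
                (mul_le_mul_of_nonneg_left h2 hb)
          _ = η := by rw [← add_mul, hab, one_mul]
      calc Metric.infDist (a • y + b • z) Y
          ≤ Metric.infDist (a • y' + b • z') Y + dist (a • y + b • z) (a • y' + b • z') :=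
            Metric.infDist_le_infDist_add_dist
        _ ≤ Metric.hausdorffDist (𝔛 i) Y + η :=
            add_le_add (Metric.infDist_le_hausdorffDist_of_mem hw' hfin) hdw
        _ ≤ 2 * η := by linarith [le_of_lt hi]
    have hzero : Metric.infDist (a • y + b • z) Y = 0 := by
      refine le_antisymm ?_ Metric.infDist_nonneg
      by_contra h
      push_neg at h
      have := key (Metric.infDist (a • y + b • z) Y / 3) (by linarith)
      linarith
    exact (hYclosed.mem_iff_infDist_zero hYne).2 hzero
  -- ε ≤ hausdorffDist Y K
  have hYK : ε ≤ Metric.hausdorffDist Y K := by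
    have hfinYK : ∀ i, EMetric.hausdorffEdist (𝔛 i) Y ≠ ⊤ := fun i =>
      hedist _ _ (h𝔛 i).1 hYne (h𝔛 i).2.2.2 hYsub
    have hfinYK2 : EMetric.hausdorffEdist Y K ≠ ⊤ := hedist _ _ hYne hKne hYsub le_rfl
    have hevent : ∀ᶠ i in (u : Filter ι),
        ε - Metric.hausdorffDist Y K ≤ Metric.hausdorffDist (𝔛 i) Y := by
      filter_upwards [huT] with i hi
      have := Metric.hausdorffDist_triangle' (s := 𝔛 i) (t := Y) (u := K) hfinYK2
      linarith
    have h0 : ε - Metric.hausdorffDist Y K ≤ 0 :=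
      ge_of_tendsto hdist hevent
    linarith
  -- find a point of K far from Y
  obtain ⟨x, hxK, hxY⟩ : ∃ x ∈ K, ε / 2 < Metric.infDist x Y := by
    by_contra h
    push_neg at h
    have : Metric.hausdorffDist Y K ≤ ε / 2 := by
      apply Metric.hausdorffDist_le_of_infDist (by linarith)
      · intro y hy
        have : Metric.infDist y K = 0 := Metric.infDist_zero_of_mem (hYsub hy)
        linarith
      · intro z hz
        exact h z hz
    linarith
  have hxnotY : x ∉ Y := fun h => by
    have := Metric.infDist_zero_of_mem h
    linarith
  -- separate x from Y by a continuous linear functional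
  obtain ⟨f, t₀, hft, htx⟩ := geometric_hahn_banach_closed_point hYconv hYclosed hxnotY
  -- normalize: subtract the inf over K
  set s₀ : ℝ := sInf (f '' K) with hs₀
  have hbddK : BddBelow (f '' K) := (hKc.image f.continuous).isBounded.bddBelow
  have hs₀le : ∀ z ∈ K, s₀ ≤ f z := fun z hz => csInf_le hbddK ⟨z, hz, rfl⟩
  let g : E →ᵃ[ℝ] ℝ :=
    { toFun := fun z => f z - s₀
      linear := f.toLinearMap
      map_vadd' := fun p v => by
        simp [map_add]
        ring }
  have hgc : Continuous g := f.continuous.sub continuous_const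
  have hgval : ∀ z, g z = f z - s₀ := fun _ => rfl
  have hgabs : ∀ z ∈ K, |g z| = g z := fun z hz => by
    rw [hgval]; exact abs_of_nonneg (by linarith [hs₀le z hz])
  -- supremum over K is at least g x
  have hbddabs : BddAbove ((fun z => |g z|) '' K) :=
    (hKc.image (continuous_abs.comp hgc)).isBounded.bddAbove
  have hgx_le : g x ≤ sSup ((fun z => |g z|) '' K) := by
    calc g x ≤ |g x| := le_abs_self _
      _ ≤ sSup ((fun z => |g z|) '' K) := le_csSup hbddabs ⟨x, hxK, rfl⟩
  -- the gap
  have hs₀t₀ : s₀ < t₀ := by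
    obtain ⟨y0, hy0⟩ := hYne
    exact lt_of_le_of_lt (hs₀le y0 (hYsub hy0)) (hft y0 hy0)
  set δ : ℝ := (f x - t₀) / (‖f‖ + 1) with hδdef
  have hnf : (0:ℝ) < ‖f‖ + 1 := by positivity
  have hδpos : 0 < δ := div_pos (by linarith) hnf
  have hδsum : (‖f‖ + 1) * δ = f x - t₀ := by
    rw [hδdef, mul_div_cancel₀ _ (ne_of_gt hnf)]
  -- eventually the sup over 𝔛 i is at most g x - δ
  have hev2 : ∀ᶠ i in (u : Filter ι),
      sSup ((fun z => |g z|) '' 𝔛 i) ≤ g x - δ := by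
    filter_upwards [hdist.eventually (gt_mem_nhds hδpos)] with i hi
    have hfin : EMetric.hausdorffEdist (𝔛 i) Y ≠ ⊤ :=
      hedist _ _ (h𝔛 i).1 hYne (h𝔛 i).2.2.2 hYsub
    apply Real.sSup_le
    · rintro w ⟨z, hz, rfl⟩
      show |g z| ≤ g x - δ
      obtain ⟨y', hy', hzy'⟩ := Metric.exists_dist_lt_of_hausdorffDist_lt hz hi hfin
      have h1 : f z - f y' ≤ ‖f‖ * δ := by
        calc f z - f y' = f (z - y') := by rw [map_sub]
          _ ≤ |f (z - y')| := le_abs_self _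
          _ ≤ ‖f‖ * ‖z - y'‖ := f.le_opNorm _
          _ ≤ ‖f‖ * δ := by
              apply mul_le_mul_of_nonneg_left _ (norm_nonneg f)
              rw [← dist_eq_norm]; exact le_of_lt hzy'
      have h2 : f y' < t₀ := hft y' hy'
      rw [hgabs z ((h𝔛 i).2.2.2 hz), hgval]
      have : g x = f x - s₀ := hgval x
      nlinarith [hδsum]
    · have : g x = f x - s₀ := hgval x
      nlinarith [hδsum, norm_nonneg f, mul_nonneg (norm_nonneg f) (le_of_lt hδpos)]
  -- take limits along u and derive the contradiction
  have hlim : Tendsto (fun i => sSup ((fun z => |g z|) '' 𝔛 i)) (u : Filter ι)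
      (𝓝 (sSup ((fun z => |g z|) '' K))) := (hnorm g hgc).mono_left hul
  have hfinal : sSup ((fun z => |g z|) '' K) ≤ g x - δ :=
    le_of_tendsto hlim hev2
  linarith
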